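/- Let E|F be a ramified quadratic extension of type (R-U). Then there exists a uniformizer π₁ of O_F that is not a norm from E: for every b ∈ E one has N_{E|F}(b) ≠ π₁. -/

import Mathlib

set_option synthInstance.maxHeartbeats 1000000
set_option maxHeartbeats 2000000

open IsLocalRing

section nu
variable {O : Type*} [CommRing O] [IsDomain O] [IsDiscreteValuationRing O]

noncomputable def nu {π₀ : O} (_hirr : Irreducible π₀) (x : O) : ℕ :=
  letI := Classical.dec (x = 0)
  if h : x = 0 then 0
  else (IsDiscreteValuationRing.associated_pow_irreducible h _hirr).choose

variable {π₀ : O} (hirr : Irreducible π₀)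
include hirr

theorem nu_spec {x : O} (hx : x ≠ 0) : Associated x (π₀ ^ nu hirr x) := by
  rw [nu]; simp only [hx, dite_false]
  exact (IsDiscreteValuationRing.associated_pow_irreducible hx hirr).choose_spec

theorem pow_assoc_inj {m n : ℕ} (h : Associated (π₀ ^ m : O) (π₀ ^ n)) : m = n := by
  wlog hmn : m ≤ n generalizing m n
  · exact (this h.symm (le_of_not_ge hmn)).symm
  obtain ⟨u, hu⟩ := h
  have hπ : π₀ ≠ 0 := hirr.ne_zero
  have h2 : (π₀ ^ (n - m) : O) = u :=
    mul_left_cancel₀ (pow_ne_zero m hπ) (by rw [← pow_add, Nat.add_sub_cancel' hmn, hu])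
  by_contra hne
  have hd : π₀ ∣ (u : O) := h2 ▸ dvd_pow_self π₀ (by omega)
  exact hirr.not_isUnit (isUnit_of_dvd_unit hd u.isUnit)

theorem nu_unique {x : O} (hx : x ≠ 0) {n : ℕ} (h : Associated x (π₀ ^ n)) :
    n = nu hirr x :=
  pow_assoc_inj hirr ((h.symm.trans (nu_spec hirr hx)))

theorem nu_mul {x y : O} (hx : x ≠ 0) (hy : y ≠ 0) :
    nu hirr (x * y) = nu hirr x + nu hirr y := by
  refine (nu_unique hirr (mul_ne_zero hx hy) ?_).symm
  rw [pow_add]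
  exact (nu_spec hirr hx).mul_mul (nu_spec hirr hy)

theorem nu_unit {u : O} (hu : IsUnit u) : nu hirr u = 0 :=
  (nu_unique hirr hu.ne_zero (by simpa using (associated_one_iff_isUnit.2 hu))).symm

theorem nu_self : nu hirr π₀ = 1 :=
  (nu_unique hirr hirr.ne_zero (by rw [pow_one])).symm

theorem nu_dvd_iff {x y : O} (hx : x ≠ 0) (hy : y ≠ 0) :
    x ∣ y ↔ nu hirr x ≤ nu hirr y := by
  constructor
  · rintro ⟨c, rfl⟩
    have hc : c ≠ 0 := by rintro rfl; simp at hy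
    rw [nu_mul hirr hx hc]; omega
  · intro h
    have h1 : x ∣ π₀ ^ nu hirr x * π₀ ^ (nu hirr y - nu hirr x) :=
      Dvd.dvd.mul_right (nu_spec hirr hx).dvd _
    rw [← pow_add, show nu hirr x + (nu hirr y - nu hirr x) = nu hirr y by omega] at h1
    exact h1.trans (nu_spec hirr hy).symm.dvd

theorem dvd_total (x y : O) : x ∣ y ∨ y ∣ x := by
  rcases eq_or_ne x 0 with rfl | hx
  · exact Or.inr (dvd_zero _)
  rcases eq_or_ne y 0 with rfl | hy
  · exact Or.inl (dvd_zero _)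
  rcases le_total (nu hirr x) (nu hirr y) with h | h
  · exact Or.inl ((nu_dvd_iff hirr hx hy).2 h)
  · exact Or.inr ((nu_dvd_iff hirr hy hx).2 h)

theorem nu_neg {x : O} (hx : x ≠ 0) : nu hirr (-x) = nu hirr x :=
  (nu_unique hirr (neg_ne_zero.2 hx) ((nu_spec hirr hx).neg_left)).symm

end nu

section core
variable {O : Type*} [CommRing O] [IsDomain O] [IsDiscreteValuationRing O]

theorem core_RU (π₀ t c : O)
    (hm : IsLocalRing.maximalIdeal O = Ideal.span {π₀})
    (hπt : π₀ ∣ t) (ht2 : t ∣ (2 : O)) (h2 : (2 : O) ≠ 0)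
    (hc : ∀ ξ : O, ¬ π₀ ∣ (ξ ^ 2 + ξ - c)) :
    ∀ x y : O, x ^ 2 + t * x * y + π₀ * y ^ 2 ≠ π₀ + c * t ^ 2 := by
  have hπ0 : π₀ ≠ 0 := by
    intro h
    exact IsDiscreteValuationRing.not_a_field O (by rw [hm, h, Ideal.span_singleton_eq_bot])
  have hirr : Irreducible π₀ :=
    IsDiscreteValuationRing.irreducible_of_span_eq_maximalIdeal π₀ hπ0 hm
  have hprime : Prime π₀ := hirr.prime
  have ht0 : t ≠ 0 := by rintro rfl; exact h2 (by simpa using ht2)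
  have hπ2 : π₀ ∣ (2 : O) := hπt.trans ht2
  -- nonunits are divisible by π₀
  have hnd : ∀ z : O, ¬ IsUnit z → π₀ ∣ z := by
    intro z hz
    have : z ∈ IsLocalRing.maximalIdeal O := hz
    rwa [hm, Ideal.mem_span_singleton] at this
  have hunit_of : ∀ z : O, π₀ ∣ z → IsUnit (1 + z) := by
    intro z hz
    by_contra h
    have h1 : π₀ ∣ 1 + z := hnd _ h
    have : π₀ ∣ (1 : O) := by
      have : (1 : O) = (1 + z) - z := by ring
      rw [this]; exact dvd_sub h1 hz
    exact hirr.not_isUnit (isUnit_of_dvd_one this)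
  intro x y heq
  -- Step 1 : π₀ ∣ x
  have hπt2 : π₀ ∣ t ^ 2 := hπt.trans (dvd_pow_self t two_ne_zero)
  have hπx : π₀ ∣ x := by
    apply hprime.dvd_of_dvd_pow (n := 2)
    have hx2 : x ^ 2 = (π₀ + c * t ^ 2) - t * x * y - π₀ * y ^ 2 := by
      linear_combination heq
    rw [hx2]
    exact dvd_sub (dvd_sub (dvd_add dvd_rfl (hπt2.mul_left c))
      ((hπt.mul_right x).mul_right y)) (dvd_mul_right π₀ _)
  -- Step 2 : π₀ ∣ y - 1
  have hππ2 : π₀ ^ 2 ∣ t ^ 2 := pow_dvd_pow_of_dvd hπt 2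
  have hππx : π₀ ^ 2 ∣ x ^ 2 := pow_dvd_pow_of_dvd hπx 2
  have hππtx : π₀ ^ 2 ∣ t * x * y := by
    have : π₀ * π₀ ∣ t * x := mul_dvd_mul hπt hπx
    rw [← sq] at this
    exact this.mul_right y
  have hym1 : π₀ ∣ y - 1 := by
    have h1 : π₀ * (y ^ 2 - 1) = c * t ^ 2 - x ^ 2 - t * x * y := by
      linear_combination heq
    obtain ⟨k, hk⟩ : π₀ ^ 2 ∣ π₀ * (y ^ 2 - 1) := by
      rw [h1]; exact dvd_sub (dvd_sub (hππ2.mul_left c) hππx) hππtx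
    have hy21 : π₀ ∣ y ^ 2 - 1 :=
      ⟨k, mul_left_cancel₀ hπ0 (by rw [hk]; ring)⟩
    apply hprime.dvd_of_dvd_pow (n := 2)
    have : (y - 1) ^ 2 = (y ^ 2 - 1) - 2 * (y - 1) := by ring
    rw [this]
    exact dvd_sub hy21 (hπ2.mul_right _)
  set d := y - 1 with hdd
  have hy : y = 1 + d := by rw [hdd]; ring
  -- main rearranged equation
  have hEqA : x ^ 2 + t * x * y - c * t ^ 2 = -(π₀ * (d * (d + 2))) := by
    rw [hdd]; linear_combination heq
  by_cases htx : t ∣ x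
  · -- Case t ∣ x
    obtain ⟨ξ, hξ⟩ := htx
    set g := ξ ^ 2 + ξ * y - c with hg
    have hEq2 : t ^ 2 * g = -(π₀ * (d * (d + 2))) := by
      rw [hξ] at hEqA
      rw [hg]; linear_combination hEqA
    suffices hgoal : π₀ ∣ g by
      apply hc ξ
      have : ξ ^ 2 + ξ - c = g - ξ * d := by rw [hg, hdd]; ring
      rw [this]
      exact dvd_sub hgoal (hym1.mul_left ξ)
    -- dichotomy producing either t² ∣ d(d+2), or parity equation
    have finishA : t ^ 2 ∣ d * (d + 2) → π₀ ∣ g := by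
      rintro ⟨h', hh⟩
      have : t ^ 2 * g = t ^ 2 * (-(π₀ * h')) := by rw [hEq2, hh]; ring
      have hgπ : g = -(π₀ * h') := mul_left_cancel₀ (pow_ne_zero 2 ht0) this
      exact ⟨-h', by rw [hgπ]; ring⟩
    have finishB : ∀ u : O, IsUnit u → d ≠ 0 → t ^ 2 * g = -(π₀ * (d ^ 2 * u)) → π₀ ∣ g := by
      intro u hu hd0 hEq3
      have hg0 : g ≠ 0 := by
        intro h0
        rw [h0, mul_zero] at hEq3
        have hne : π₀ * (d ^ 2 * u) ≠ 0 :=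
          mul_ne_zero hπ0 (mul_ne_zero (pow_ne_zero 2 hd0) hu.ne_zero)
        exact hne (neg_eq_zero.1 hEq3.symm)
      have hνL : nu hirr (t ^ 2 * g) = 2 * nu hirr t + nu hirr g := by
        rw [nu_mul hirr (pow_ne_zero 2 ht0) hg0, sq, nu_mul hirr ht0 ht0]; ring
      have hνR : nu hirr (-(π₀ * (d ^ 2 * u))) = 1 + 2 * nu hirr d := by
        rw [nu_neg hirr (mul_ne_zero hπ0 (mul_ne_zero (pow_ne_zero 2 hd0) hu.ne_zero)),
          nu_mul hirr hπ0 (mul_ne_zero (pow_ne_zero 2 hd0) hu.ne_zero),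
          nu_mul hirr (pow_ne_zero 2 hd0) hu.ne_zero, nu_unit hirr hu, nu_self hirr,
          sq, nu_mul hirr hd0 hd0]
        ring
      have hEqν : 2 * nu hirr t + nu hirr g = 1 + 2 * nu hirr d := by
        rw [← hνL, ← hνR, hEq3]
      have : 1 ≤ nu hirr g := by omega
      have := (nu_dvd_iff hirr hπ0 hg0).2 (by rw [nu_self hirr]; exact this)
      exact this
    rcases dvd_total hirr 2 d with h2d | hd2
    · -- 2 ∣ d
      obtain ⟨d', hd'⟩ := h2d
      apply finishA
      have h22 : (2 : O) ^ 2 ∣ d * (d + 2) := ⟨d' * (d' + 1), by rw [hd']; ring⟩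
      exact (pow_dvd_pow_of_dvd ht2 2).trans h22
    · obtain ⟨s, hs⟩ := hd2
      have hd0 : d ≠ 0 := fun h => h2 (by rw [hs, h, zero_mul])
      have hdp2 : d + 2 = d * (1 + s) := by rw [hs]; ring
      by_cases hsu : IsUnit s
      · apply finishA
        have hdd2 : d = 2 * ↑hsu.unit⁻¹ := by
          have h1 : (2 : O) * ↑hsu.unit⁻¹ = d := by
            rw [hs, mul_assoc, hsu.mul_val_inv, mul_one]
          exact h1.symm
        have h4d : (2 : O) ^ 2 ∣ d ^ 2 := ⟨(↑hsu.unit⁻¹ : O) ^ 2, by rw [hdd2]; ring⟩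
        have : d ^ 2 ∣ d * (d + 2) := ⟨1 + s, by rw [hdp2]; ring⟩
        exact (pow_dvd_pow_of_dvd ht2 2).trans (h4d.trans this)
      · have hπs : π₀ ∣ s := hnd s hsu
        have hu : IsUnit (1 + s) := hunit_of s hπs
        apply finishB (1 + s) hu hd0
        rw [hEq2, hdp2]; ring
  · -- Case ¬ t ∣ x
    have hxt : x ∣ t := (dvd_total hirr t x).resolve_left htx
    have hx0 : x ≠ 0 := fun h => htx (by rw [h]; exact dvd_zero t)
    obtain ⟨s', hs'⟩ := hxt
    have hs'nu : ¬ IsUnit s' := by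
      intro hu
      apply htx
      have h1 : t * ↑hu.unit⁻¹ = x := by
        rw [hs', mul_assoc, hu.mul_val_inv, mul_one]
      exact ⟨↑hu.unit⁻¹, h1.symm⟩
    have hπs' : π₀ ∣ s' := hnd s' hs'nu
    have hU : IsUnit (1 + (s' * y - c * s' ^ 2)) := by
      apply hunit_of
      exact dvd_sub (hπs'.mul_right y)
        ((hπs'.trans (dvd_pow_self s' two_ne_zero)).mul_left c)
    set U := 1 + (s' * y - c * s' ^ 2) with hUdef
    have hEqX : x ^ 2 * U = -(π₀ * (d * (d + 2))) := by
      rw [hs'] at hEqA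
      rw [hUdef]; linear_combination hEqA
    have hd0 : d ≠ 0 := by
      intro h0
      rw [h0] at hEqX
      simp only [zero_mul, mul_zero, neg_zero] at hEqX
      exact (mul_ne_zero (pow_ne_zero 2 hx0) hU.ne_zero) hEqX
    have hd20 : d + 2 ≠ 0 := by
      intro h0
      rw [h0] at hEqX
      simp only [mul_zero, neg_zero] at hEqX
      exact (mul_ne_zero (pow_ne_zero 2 hx0) hU.ne_zero) hEqX
    -- ν-equation
    have hνL : nu hirr (x ^ 2 * U) = 2 * nu hirr x := by
      rw [nu_mul hirr (pow_ne_zero 2 hx0) hU.ne_zero, nu_unit hirr hU, sq,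
        nu_mul hirr hx0 hx0]; ring
    have hνR : nu hirr (-(π₀ * (d * (d + 2)))) = 1 + nu hirr d + nu hirr (d + 2) := by
      rw [nu_neg hirr (mul_ne_zero hπ0 (mul_ne_zero hd0 hd20)),
        nu_mul hirr hπ0 (mul_ne_zero hd0 hd20), nu_mul hirr hd0 hd20, nu_self hirr]
      ring
    have hEqν : 2 * nu hirr x = 1 + nu hirr d + nu hirr (d + 2) := by
      rw [← hνL, ← hνR, hEqX]
    have hνxt : nu hirr x < nu hirr t := by
      have := (nu_dvd_iff hirr ht0 hx0).not.1 htx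
      omega
    have hνt2 : nu hirr t ≤ nu hirr 2 := (nu_dvd_iff hirr ht0 h2).1 ht2
    rcases dvd_total hirr 2 d with h2d | hd2
    · have hν1 : nu hirr 2 ≤ nu hirr d := (nu_dvd_iff hirr h2 hd0).1 h2d
      have hν2 : nu hirr 2 ≤ nu hirr (d + 2) :=
        (nu_dvd_iff hirr h2 hd20).1 (dvd_add h2d dvd_rfl)
      omega
    · obtain ⟨s, hs⟩ := hd2
      have hs0 : s ≠ 0 := by
        intro h0; rw [h0, mul_zero] at hs; exact h2 hs
      have hdp2 : d + 2 = d * (1 + s) := by rw [hs]; ring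
      have h1s0 : (1 + s : O) ≠ 0 := by
        intro h0; rw [hdp2, h0, mul_zero] at hd20; exact hd20 rfl
      have hνd2 : nu hirr (d + 2) = nu hirr d + nu hirr (1 + s) := by
        rw [hdp2, nu_mul hirr hd0 h1s0]
      by_cases hsu : IsUnit s
      · have hν2d : nu hirr 2 = nu hirr d := by
          have := nu_mul hirr hd0 hs0
          rw [← hs, nu_unit hirr hsu] at this
          omega
        omega
      · have hu1s : IsUnit (1 + s) := hunit_of s (hnd s hsu)
        have : nu hirr (1 + s) = 0 := nu_unit hirr hu1s
        omega
end core

theorem norm_formula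
    (F : Type*) [Field F] (tv πv : F)
    (E : Type*) [Field E] [Algebra F E] [FiniteDimensional F E]
    (hdeg : Module.finrank F E = 2) (ϖ : E)
    (hϖ : ϖ ^ 2 - algebraMap F E tv * ϖ + algebraMap F E πv = 0)
    (hgen : Algebra.adjoin F {ϖ} = ⊤) (b : E) :
    ∃ x y : F, Algebra.norm F b = x ^ 2 + tv * x * y + πv * y ^ 2 := by
  classical
  have hint : IsIntegral F ϖ := IsIntegral.of_finite F ϖ
  let e : (Algebra.adjoin F {ϖ}) ≃ₐ[F] E :=
    (Subalgebra.equivOfEq _ _ hgen).trans Subalgebra.topEquiv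
  let pb : PowerBasis F E := (Algebra.adjoin.powerBasis hint).map e
  have hgen' : pb.gen = ϖ := by
    simp [pb, e, PowerBasis.map_gen, Algebra.adjoin.powerBasis_gen]
  have hdim : pb.dim = 2 := by rw [← pb.finrank, hdeg]
  let B : Module.Basis (Fin 2) F E := pb.basis.reindex (finCongr hdim)
  have hB : ∀ i : Fin 2, B i = ϖ ^ (i : ℕ) := by
    intro i
    rw [Module.Basis.reindex_apply, PowerBasis.coe_basis, hgen']
    congr 1
  have hB0 : B 0 = 1 := by rw [hB 0]; exact pow_zero ϖ
  have hB1 : B 1 = ϖ := by rw [hB 1]; exact pow_one ϖ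
  have hrepr : ∀ (a c : F) (i : Fin 2), B.repr (a • B 0 + c • B 1) i = ![a, c] i := by
    intro a c i
    rw [map_add, map_smul, map_smul, B.repr_self, B.repr_self]
    fin_cases i <;> simp
  set x := B.repr b 0 with hx
  set y := B.repr b 1 with hy
  have hb : b = x • B 0 + y • B 1 := by
    have h := B.sum_repr b
    rw [Fin.sum_univ_two] at h
    exact h.symm
  have hϖ2 : ϖ ^ 2 = algebraMap F E tv * ϖ - algebraMap F E πv := by
    linear_combination hϖ
  have hmul : b * ϖ = (-(πv * y)) • B 0 + (x + tv * y) • B 1 := by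
    rw [hb, hB0, hB1]
    rw [add_mul, smul_mul_assoc, one_mul, smul_mul_assoc, ← sq, hϖ2]
    simp only [smul_sub, Algebra.smul_def, map_add, map_mul, map_neg]
    ring
  refine ⟨x, y, ?_⟩
  rw [Algebra.norm_eq_matrix_det B b, Matrix.det_fin_two]
  have e00 : Algebra.leftMulMatrix B b 0 0 = x := by
    rw [Algebra.leftMulMatrix_eq_repr_mul, hB0, mul_one, ← hx]
  have e10 : Algebra.leftMulMatrix B b 1 0 = y := by
    rw [Algebra.leftMulMatrix_eq_repr_mul, hB0, mul_one, ← hy]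
  have e01 : Algebra.leftMulMatrix B b 0 1 = -(πv * y) := by
    rw [Algebra.leftMulMatrix_eq_repr_mul, hB1, hmul, hrepr]
    simp
  have e11 : Algebra.leftMulMatrix B b 1 1 = x + tv * y := by
    rw [Algebra.leftMulMatrix_eq_repr_mul, hB1, hmul, hrepr]
    simp
  rw [e00, e10, e01, e11]
  ring

open IsLocalRing

theorem residue_choice
    (F : Type*) [Field F] [Algebra ℚ_[2] F] [FiniteDimensional ℚ_[2] F]
    [Algebra ℤ_[2] F] [IsScalarTower ℤ_[2] ℚ_[2] F]
    [IsLocalRing (integralClosure ℤ_[2] F)]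
    (π₀ : integralClosure ℤ_[2] F)
    (hπ₀ : IsLocalRing.maximalIdeal (integralClosure ℤ_[2] F) = Ideal.span {π₀})
    (hπ2 : π₀ ∣ 2) :
    ∃ c : integralClosure ℤ_[2] F,
      ∀ ξ : integralClosure ℤ_[2] F, ¬ π₀ ∣ (ξ ^ 2 + ξ - c) := by
  classical
  haveI hnoeth : IsNoetherian ℤ_[2] (integralClosure ℤ_[2] F) :=
    IsIntegralClosure.isNoetherian ℤ_[2] ℚ_[2] F (integralClosure ℤ_[2] F)
  haveI : Module.Finite ℤ_[2] (integralClosure ℤ_[2] F) := ⟨IsNoetherian.noetherian ⊤⟩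
  let k := IsLocalRing.ResidueField (integralClosure ℤ_[2] F)
  let q : integralClosure ℤ_[2] F →+* k := IsLocalRing.residue _
  have hqsurj : Function.Surjective q := Ideal.Quotient.mk_surjective
  have hdvd_iff : ∀ z : integralClosure ℤ_[2] F, π₀ ∣ z ↔ q z = 0 := by
    intro z
    rw [show q z = IsLocalRing.residue _ z from rfl,
      IsLocalRing.residue_eq_zero_iff, hπ₀, Ideal.mem_span_singleton]
  have h2k : (2 : k) = 0 := by
    have h := (hdvd_iff 2).1 hπ2
    rw [map_ofNat] at h; exact h
  haveI : Module.Finite ℤ_[2] k :=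
    Module.Finite.of_surjective (Ideal.Quotient.mkₐ ℤ_[2] _).toLinearMap hqsurj
  haveI hchar : CharP k 2 := by
    have hd : ringChar k ∣ 2 := ringChar.dvd h2k
    have h1 : ringChar k ≠ 1 := CharP.ringChar_ne_one
    have heq : ringChar k = 2 := by
      rcases (Nat.prime_two).eq_one_or_self_of_dvd _ hd with h | h
      · exact absurd h h1
      · exact h
    exact ringChar.of_eq heq
  let cast2 : ZMod 2 →+* k := ZMod.castHom dvd_rfl k
  have keyAlg : ∀ a : ℤ_[2], algebraMap ℤ_[2] k a = cast2 (PadicInt.toZMod a) := by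
    intro a
    set r := PadicInt.toZMod a with hrdef
    obtain ⟨b, hb⟩ : (2 : ℤ_[2]) ∣ a - (ZMod.cast r : ℤ_[2]) := by
      have h := PadicInt.toZMod_spec a
      rwa [PadicInt.maximalIdeal_eq_span_p, Ideal.mem_span_singleton] at h
    have ha : a = (ZMod.cast r : ℤ_[2]) + 2 * b := by rw [← hb]; ring
    rw [ha, map_add, map_mul]
    have h2 : algebraMap ℤ_[2] k (2 : ℤ_[2]) = 0 := by
      rw [map_ofNat]; exact_mod_cast h2k
    rw [h2, zero_mul, add_zero]
    have hr : ∀ r : ZMod 2, algebraMap ℤ_[2] k (ZMod.cast r : ℤ_[2]) = cast2 r := by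
      intro r
      rw [show cast2 r = ZMod.cast r from ZMod.castHom_apply r,
        ← ZMod.natCast_val, ← ZMod.natCast_val, map_natCast]
    exact hr _
  haveI : Finite k := by
    obtain ⟨s, hs⟩ := Module.Finite.fg_top (R := ℤ_[2]) (M := k)
    let f : (↥(s : Set k) → ZMod 2) → k := fun a => ∑ i : ↥(s : Set k), cast2 (a i) * (i : k)
    apply Finite.of_surjective f
    intro x
    have hx : x ∈ Submodule.span ℤ_[2] (s : Set k) := by rw [hs]; exact Submodule.mem_top
    refine Submodule.span_induction ?_ ?_ ?_ ?_ hx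
    · intro z hz
      refine ⟨fun i => if i = ⟨z, hz⟩ then 1 else 0, ?_⟩
      simp only [f, apply_ite cast2, map_one, map_zero, ite_mul, one_mul, zero_mul]
      rw [Finset.sum_ite_eq' Finset.univ (⟨z, hz⟩ : ↥(s : Set k))]
      simp
    · exact ⟨0, by simp [f]⟩
    · rintro z w _ _ ⟨a, rfl⟩ ⟨b, rfl⟩
      refine ⟨a + b, ?_⟩
      simp only [f, Pi.add_apply, map_add, add_mul, Finset.sum_add_distrib]
    · rintro r z _ ⟨a, rfl⟩
      refine ⟨fun i => PadicInt.toZMod r * a i, ?_⟩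
      simp only [f, map_mul, Finset.mul_sum, Finset.smul_sum]
      refine Finset.sum_congr rfl fun i _ => ?_
      rw [Algebra.smul_def, keyAlg r, mul_assoc]
  -- Artin-Schreier map is not surjective
  have hnotinj : ¬ Function.Injective (fun σ : k => σ ^ 2 + σ) := by
    intro h
    have h10 : (1 : k) = 0 := by
      apply h
      show (1 : k) ^ 2 + 1 = (0 : k) ^ 2 + 0
      rw [one_pow, one_add_one_eq_two, h2k]
      norm_num
    exact one_ne_zero h10
  have hnotsurj : ¬ Function.Surjective (fun σ : k => σ ^ 2 + σ) := fun hsurj =>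
    hnotinj (Finite.injective_iff_surjective.mpr hsurj)
  rw [Function.Surjective] at hnotsurj
  push_neg at hnotsurj
  obtain ⟨γ, hγ⟩ := hnotsurj
  obtain ⟨c, hc⟩ := hqsurj γ
  refine ⟨c, fun ξ hdvd => ?_⟩
  have h0 := (hdvd_iff _).1 hdvd
  rw [map_sub, map_add, map_pow, hc] at h0
  exact hγ (q ξ) (by linear_combination h0)

/-- **Existence of a non-norm uniformizer for an (R-U) extension.**
Let `F` be a finite extension of `ℚ₂` with ring of integers `O_F` and uniformizer `π₀`,
and let `E|F` be a ramified quadratic extension of type (R-U): `E = F(Π)` where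
`Π² − t·Π + π₀ = 0` for some `t ∈ O_F` with `π₀ ∣ t` and `t ∣ 2`.  Then there exists a
uniformizer `π₁` of `O_F` that is not a norm from `E`: for every `b ∈ E` one has
`N_{E|F}(b) ≠ π₁`. -/
theorem exists_nonnorm_uniformizer_RU
    (F : Type*) [Field F] [Algebra ℚ_[2] F] [FiniteDimensional ℚ_[2] F]
    [Algebra ℤ_[2] F] [IsScalarTower ℤ_[2] ℚ_[2] F]
    [IsLocalRing (integralClosure ℤ_[2] F)]
    (π₀ t : integralClosure ℤ_[2] F)
    (hπ₀ : IsLocalRing.maximalIdeal (integralClosure ℤ_[2] F) = Ideal.span {π₀})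
    (hπt : π₀ ∣ t) (ht2 : t ∣ 2)
    (E : Type*) [Field E] [Algebra F E] [FiniteDimensional F E]
    (hdeg : Module.finrank F E = 2)
    (ϖ : E)
    (hϖ : ϖ ^ 2 - algebraMap F E (t : F) * ϖ + algebraMap F E (π₀ : F) = 0)
    (hgen : Algebra.adjoin F {ϖ} = ⊤) :
    ∃ π₁ : integralClosure ℤ_[2] F,
      IsLocalRing.maximalIdeal (integralClosure ℤ_[2] F) = Ideal.span {π₁} ∧
      ∀ b : E, Algebra.norm F b ≠ (π₁ : F) := by
  classical
  haveI : CharZero F := charZero_of_injective_algebraMap (algebraMap ℚ_[2] F).injective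
  -- instances on the ring of integers O
  haveI hfrac : IsFractionRing (integralClosure ℤ_[2] F) F :=
    integralClosure.isFractionRing_of_finite_extension ℚ_[2] F
  haveI hnoethring : IsNoetherianRing (integralClosure ℤ_[2] F) :=
    IsIntegralClosure.isNoetherianRing ℤ_[2] ℚ_[2] F (integralClosure ℤ_[2] F)
  have h2O : (2 : integralClosure ℤ_[2] F) ≠ 0 := by
    intro h
    have h1 : ((1 : integralClosure ℤ_[2] F) + 1 : integralClosure ℤ_[2] F) = 0 := by
      rw [one_add_one_eq_two]; exact h
    have h2 := congrArg (fun z : integralClosure ℤ_[2] F => (z : F)) h1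
    simp only [Subalgebra.coe_add, Subalgebra.coe_one, ZeroMemClass.coe_zero] at h2
    norm_num at h2
  have hnf : ¬ IsField (integralClosure ℤ_[2] F) := by
    intro hf
    have hm : IsLocalRing.maximalIdeal (integralClosure ℤ_[2] F) = ⊥ :=
      IsLocalRing.isField_iff_maximalIdeal_eq.mp hf
    rw [hπ₀, Ideal.span_singleton_eq_bot] at hm
    rw [hm] at hπt
    have ht0 : t = 0 := zero_dvd_iff.mp hπt
    rw [ht0] at ht2
    exact h2O (zero_dvd_iff.mp ht2)
  haveI hdvr : IsDiscreteValuationRing (integralClosure ℤ_[2] F) := by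
    have := (IsDiscreteValuationRing.TFAE (integralClosure ℤ_[2] F) hnf).out 0 4
    exact this.mpr ⟨π₀, hπ₀⟩
  -- basic facts
  have hπ0 : π₀ ≠ 0 := by
    intro h
    exact IsDiscreteValuationRing.not_a_field _ (by rw [hπ₀, h, Ideal.span_singleton_eq_bot])
  have hirr : Irreducible π₀ :=
    IsDiscreteValuationRing.irreducible_of_span_eq_maximalIdeal π₀ hπ0 hπ₀
  have hprime : Prime π₀ := (UniqueFactorizationMonoid.irreducible_iff_prime).mp hirr
  have hπ2 : π₀ ∣ 2 := hπt.trans ht2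
  -- choose the Artin-Schreier non-value c
  obtain ⟨c, hc⟩ := residue_choice F π₀ hπ₀ hπ2
  obtain ⟨t₁, ht₁⟩ := id hπt
  refine ⟨π₀ + c * t ^ 2, ?_, ?_⟩
  · -- π₀ + c t² is a uniformizer
    have hassoc : Associated π₀ (π₀ + c * t ^ 2) := by
      have huu : IsUnit (1 + π₀ * (c * t₁ ^ 2)) := by
        by_contra hnu
        have h1 : π₀ ∣ 1 + π₀ * (c * t₁ ^ 2) := by
          have : (1 + π₀ * (c * t₁ ^ 2)) ∈ IsLocalRing.maximalIdeal (integralClosure ℤ_[2] F) :=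
            hnu
          rwa [hπ₀, Ideal.mem_span_singleton] at this
        have : π₀ ∣ 1 := by
          have h2' : (1 : integralClosure ℤ_[2] F) =
              (1 + π₀ * (c * t₁ ^ 2)) - π₀ * (c * t₁ ^ 2) := by ring
          rw [h2']
          exact dvd_sub h1 (dvd_mul_right π₀ _)
        exact hirr.not_isUnit (isUnit_of_dvd_one this)
      refine ⟨huu.unit, ?_⟩
      rw [huu.unit_spec, ht₁]
      ring
    rw [hπ₀]
    exact Ideal.span_singleton_eq_span_singleton.mpr hassoc
  · intro b hb
    obtain ⟨x, y, hxy⟩ := norm_formula F ((t : F)) ((π₀ : F)) E hdeg ϖ hϖ hgen b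
    have heqF : x ^ 2 + (t : F) * x * y + (π₀ : F) * y ^ 2
        = (π₀ : F) + (c : F) * (t : F) ^ 2 := by
      rw [← hxy, hb]
      push_cast
      ring
    -- Step A : clear denominators
    have hπF : ((π₀ : F)) ≠ 0 := by
      intro h
      exact hπ0 (by exact_mod_cast Subtype.ext h)
    have hOmem : ∀ z : F, ∃ n : ℕ, ((π₀ : F)) ^ n * z ∈ integralClosure ℤ_[2] F := by
      intro z
      obtain ⟨⟨b', hb'⟩, c', hc'⟩ :=
        IsLocalization.exists_integer_multiple (nonZeroDivisors (integralClosure ℤ_[2] F)) z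
      have hb0 : b' ≠ 0 := mem_nonZeroDivisors_iff_ne_zero.mp hb'
      obtain ⟨u, hu⟩ := nu_spec hirr hb0
      refine ⟨nu hirr b', ?_⟩
      have hbz : (b' : F) * z = (c' : F) := by
        rw [Submonoid.smul_def, Algebra.smul_def] at hc'
        exact hc'.symm
      have hcoe : ((π₀ : F)) ^ nu hirr b' = (b' : F) * ((u : integralClosure ℤ_[2] F) : F) := by
        have : (π₀ ^ nu hirr b' : integralClosure ℤ_[2] F) = b' * (u : integralClosure ℤ_[2] F) :=
          hu.symm
        exact_mod_cast congrArg (fun z : integralClosure ℤ_[2] F => (z : F)) this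
      rw [hcoe, mul_assoc, mul_comm ((u : integralClosure ℤ_[2] F) : F) z, ← mul_assoc, hbz]
      exact mul_mem c'.2 (u : integralClosure ℤ_[2] F).2
    have hP : ∃ n : ℕ, ((π₀ : F)) ^ n * x ∈ integralClosure ℤ_[2] F ∧
        ((π₀ : F)) ^ n * y ∈ integralClosure ℤ_[2] F := by
      obtain ⟨n₁, h₁⟩ := hOmem x
      obtain ⟨n₂, h₂⟩ := hOmem y
      refine ⟨n₁ + n₂, ?_, ?_⟩
      · rw [show ((π₀ : F)) ^ (n₁ + n₂) * x = (π₀ : F) ^ n₂ * (((π₀ : F)) ^ n₁ * x) by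
          rw [pow_add]; ring]
        exact mul_mem (pow_mem π₀.2 n₂) h₁
      · rw [show ((π₀ : F)) ^ (n₁ + n₂) * y = (π₀ : F) ^ n₁ * (((π₀ : F)) ^ n₂ * y) by
          rw [pow_add]; ring]
        exact mul_mem (pow_mem π₀.2 n₁) h₂
    set n₀ := Nat.find hP with hn₀
    obtain ⟨hx', hy'⟩ := Nat.find_spec hP
    set x' : integralClosure ℤ_[2] F := ⟨_, hx'⟩ with hx'def
    set y' : integralClosure ℤ_[2] F := ⟨_, hy'⟩ with hy'def
    have heqO : x' ^ 2 + t * x' * y' + π₀ * y' ^ 2 = π₀ ^ (2 * n₀) * (π₀ + c * t ^ 2) := by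
      apply Subtype.ext
      push_cast
      show ((π₀ : F) ^ n₀ * x) ^ 2 + (t : F) * ((π₀ : F) ^ n₀ * x) * ((π₀ : F) ^ n₀ * y)
          + (π₀ : F) * ((π₀ : F) ^ n₀ * y) ^ 2
          = (π₀ : F) ^ (2 * n₀) * ((π₀ : F) + (c : F) * (t : F) ^ 2)
      rw [show (2 : ℕ) * n₀ = n₀ + n₀ by ring, pow_add]
      linear_combination ((π₀ : F) ^ n₀ * (π₀ : F) ^ n₀) * heqF
    rcases Nat.eq_zero_or_pos n₀ with hn0 | hnpos
    · rw [hn0] at heqO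
      simp only [mul_zero, pow_zero, one_mul] at heqO
      exact core_RU π₀ t c hπ₀ hπt ht2 h2O hc x' y' heqO
    · -- n₀ ≥ 1 : contradiction with minimality
      have h2n : π₀ ^ 2 ∣ π₀ ^ (2 * n₀) * (π₀ + c * t ^ 2) :=
        (pow_dvd_pow π₀ (by omega)).mul_right _
      have hd1 : π₀ ∣ π₀ ^ (2 * n₀) * (π₀ + c * t ^ 2) :=
        (dvd_pow_self π₀ (by omega : 2 * n₀ ≠ 0)).mul_right _
      have hπx' : π₀ ∣ x' := by
        apply hprime.dvd_of_dvd_pow (n := 2)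
        have hx2 : x' ^ 2 = π₀ ^ (2 * n₀) * (π₀ + c * t ^ 2) - t * x' * y' - π₀ * y' ^ 2 := by
          linear_combination heqO
        rw [hx2]
        exact dvd_sub (dvd_sub hd1 ((hπt.mul_right x').mul_right y')) (dvd_mul_right π₀ _)
      have hπy' : π₀ ∣ y' := by
        apply hprime.dvd_of_dvd_pow (n := 2)
        have h3 : π₀ ^ 2 ∣ π₀ * y' ^ 2 := by
          have hy2 : π₀ * y' ^ 2
              = π₀ ^ (2 * n₀) * (π₀ + c * t ^ 2) - x' ^ 2 - t * x' * y' := by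
            linear_combination heqO
          rw [hy2]
          refine dvd_sub (dvd_sub h2n (pow_dvd_pow_of_dvd hπx' 2)) ?_
          have h4 : π₀ * π₀ ∣ t * x' := mul_dvd_mul hπt hπx'
          rw [← sq] at h4
          exact h4.mul_right y'
        obtain ⟨m, hm⟩ := h3
        exact ⟨m, mul_left_cancel₀ hπ0 (by rw [hm]; ring)⟩
      obtain ⟨x₁, hx1⟩ := hπx'
      obtain ⟨y₁, hy1⟩ := hπy'
      have hsplit : ((π₀ : F)) ^ n₀ = (π₀ : F) * ((π₀ : F)) ^ (n₀ - 1) := by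
        conv_lhs => rw [show n₀ = (n₀ - 1) + 1 by omega]
        rw [pow_succ]
        ring
      refine Nat.find_min hP (show n₀ - 1 < n₀ by omega) ⟨?_, ?_⟩
      · have hxx : (π₀ : F) * (((π₀ : F)) ^ (n₀ - 1) * x) = (π₀ : F) * (x₁ : F) := by
          rw [← mul_assoc, ← hsplit]
          have h5 := congrArg (Subtype.val) hx1
          push_cast at h5
          exact h5
        have h6 := mul_left_cancel₀ hπF hxx
        rw [h6]
        exact x₁.2
      · have hyy : (π₀ : F) * (((π₀ : F)) ^ (n₀ - 1) * y) = (π₀ : F) * (y₁ : F) := by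
          rw [← mul_assoc, ← hsplit]
          have h5 := congrArg (Subtype.val) hy1
          push_cast at h5
          exact h5
        have h6 := mul_left_cancel₀ hπF hyy
        rw [h6]
        exact y₁.2
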